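/- Let N ∈ ℕ and let c : S → ℕ satisfy Σ_{s∈S} c(s) = N and c(s) ∈ {⌊f(s)·N⌋, ⌊f(s)·N⌋ + 1} for every s ∈ S. Suppose M* is an integer with M* > N and Σ_{s∈S} max{0, ⌊f(s)·M*⌋ − c(s)} = M* − N. Then there exists s ∈ S such that ⌊f(s)·M*⌋ ≥ c(s) + 1 and c(s) = ⌊f(s)·N⌋. -/

import Mathlib

open Finset

theorem stmt_5 {S : Type*} [Fintype S] [DecidableEq S] [Nonempty S]
    (f : S → ℝ) (hf0 : ∀ s, 0 < f s) (hf1 : ∀ s, f s ≤ 1)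
    (hsum : ∑ s, f s = 1)
    (N : ℕ) (c : S → ℕ) (hc : ∑ s, c s = N)
    (hrange : ∀ s : S, (c s : ℤ) = ⌊f s * (N : ℝ)⌋ ∨ (c s : ℤ) = ⌊f s * (N : ℝ)⌋ + 1)
    (Mstar : ℤ) (hM : (N : ℤ) < Mstar)
    (heq : ∑ s, max 0 (⌊f s * (Mstar : ℝ)⌋ - (c s : ℤ)) = Mstar - (N : ℤ)) :
    ∃ s : S, (c s : ℤ) + 1 ≤ ⌊f s * (Mstar : ℝ)⌋ ∧ (c s : ℤ) = ⌊f s * (N : ℝ)⌋ := by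
  by_contra hcon
  push_neg at hcon
  set d : S → ℤ := fun s => ⌊f s * (Mstar : ℝ)⌋ - (c s : ℤ) with hd
  set A : Finset S := univ.filter (fun s => 1 ≤ d s) with hA
  have hsumA : ∑ s ∈ A, d s = Mstar - (N : ℤ) := by
    rw [← heq]
    rw [← Finset.sum_subset A.subset_univ (fun s _ hs => ?_)]
    · exact Finset.sum_congr rfl fun s hs => by
        have : 1 ≤ d s := (Finset.mem_filter.mp hs).2
        simp [hd, max_eq_right (by omega : (0:ℤ) ≤ d s)]
        simp [hd] at this; omega
    · have : ¬ (1 ≤ d s) := by simpa [hA] using hs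
      simp [hd] at this ⊢
      omega
  have hAne : A.Nonempty := by
    by_contra hemp
    rw [Finset.not_nonempty_iff_eq_empty] at hemp
    rw [hemp, Finset.sum_empty] at hsumA
    omega
  -- pointwise strict inequality on A
  have hpt : ∀ s ∈ A, (d s : ℝ) < f s * ((Mstar : ℝ) - (N : ℝ)) := by
    intro s hs
    have h1 : 1 ≤ d s := (Finset.mem_filter.mp hs).2
    have h2 : (c s : ℤ) + 1 ≤ ⌊f s * (Mstar : ℝ)⌋ := by simp [hd] at h1; omega
    have h3 : (c s : ℤ) ≠ ⌊f s * (N : ℝ)⌋ := fun h => hcon s h2 h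
    have h4 : (c s : ℤ) = ⌊f s * (N : ℝ)⌋ + 1 := (hrange s).resolve_left h3
    have h5 : (⌊f s * (Mstar : ℝ)⌋ : ℝ) ≤ f s * (Mstar : ℝ) := Int.floor_le _
    have h6 : f s * (N : ℝ) < (⌊f s * (N : ℝ)⌋ : ℝ) + 1 := Int.lt_floor_add_one _
    have h7 : ((c s : ℕ) : ℝ) = (⌊f s * (N : ℝ)⌋ : ℝ) + 1 := by exact_mod_cast h4
    have : (d s : ℝ) = (⌊f s * (Mstar : ℝ)⌋ : ℝ) - (c s : ℝ) := by
      simp [hd]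
    rw [this, h7]
    nlinarith
  have hlt : ((Mstar - (N : ℤ) : ℤ) : ℝ) < ∑ s, f s * ((Mstar : ℝ) - (N : ℝ)) := by
    have e1 : ((Mstar - (N : ℤ) : ℤ) : ℝ) = ∑ s ∈ A, (d s : ℝ) := by
      rw [← hsumA]; push_cast; ring
    have e2 : ∑ s ∈ A, (d s : ℝ) < ∑ s ∈ A, f s * ((Mstar : ℝ) - (N : ℝ)) :=
      Finset.sum_lt_sum_of_nonempty hAne hpt
    have e3 : ∑ s ∈ A, f s * ((Mstar : ℝ) - (N : ℝ)) ≤ ∑ s, f s * ((Mstar : ℝ) - (N : ℝ)) := by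
      apply Finset.sum_le_sum_of_subset_of_nonneg A.subset_univ
      intro s _ _
      have : (0:ℝ) < (Mstar : ℝ) - (N : ℝ) := by
        have : ((N:ℤ):ℝ) < (Mstar : ℝ) := by exact_mod_cast hM
        push_cast at this; linarith
      exact mul_nonneg (hf0 s).le this.le
    linarith [e1 ▸ lt_of_lt_of_le e2 e3]
  have : ∑ s, f s * ((Mstar : ℝ) - (N : ℝ)) = ((Mstar - (N : ℤ) : ℤ) : ℝ) := by
    rw [← Finset.sum_mul, hsum, one_mul]; push_cast; ring
  rw [this] at hlt
  exact lt_irrefl _ hlt
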